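/- Let t ≥ 0 and let (ξ⁻, ξ⁺) be a connected component of A_t = { x ∈ ℝ : B(x) > t } containing no integer. Write ξ⁻ = [a₀; a₁, …, a_{N−1}, a_N⁻, a_{N+1}⁻, …] and ξ⁺ = [a₀; a₁, …, a_{N−1}, a_N⁺, a_{N+1}⁺, …], where N ≥ 1 is the first index at which the two continued fraction expansions differ. Then: if N is even, a_N⁺ ≥ 2, a_N⁻ = a_N⁺ − 1, a⁺_{N+2k} = 1 for all k ≥ 1, and a⁻_{N+2k+1} = 1 for all k ≥ 0; if N is odd, a_N⁻ ≥ 2, a_N⁺ = a_N⁻ − 1, a⁻_{N+2k} = 1 for all k ≥ 1, and a⁺_{N+2k+1} = 1 for all k ≥ 0. -/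

import Mathlib

open scoped ENNReal Topology

noncomputable def gaussIter (x : ℝ) : ℕ → ℝ
  | 0 => Int.fract x
  | n + 1 => Int.fract (gaussIter x n)⁻¹

noncomputable def pquot (x : ℝ) : ℕ → ℤ
  | 0 => ⌊x⌋
  | n + 1 => ⌊(gaussIter x n)⁻¹⌋

noncomputable def qden (x : ℝ) : ℕ → ℤ
  | 0 => 1
  | 1 => pquot x 1
  | n + 2 => pquot x (n + 2) * qden x (n + 1) + qden x n

noncomputable def pnum (x : ℝ) : ℕ → ℤ
  | 0 => pquot x 0
  | 1 => pquot x 1 * pquot x 0 + 1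
  | n + 2 => pquot x (n + 2) * pnum x (n + 1) + pnum x n

noncomputable def brjunoTerm (x : ℝ) (k : ℕ) : ℝ :=
  Real.log (pquot x (k + 1)) / (qden x k : ℝ)

open Classical in
noncomputable def brjuno (x : ℝ) : ℝ≥0∞ :=
  if Irrational x then ∑' k, ENNReal.ofReal (brjunoTerm x k) else ⊤

noncomputable def brjunoTailE (x : ℝ) (n : ℕ) : ℝ≥0∞ :=
  ∑' k, ENNReal.ofReal (brjunoTerm x (n + k))

noncomputable def cfLen (x : ℝ) : ℕ := sInf {n | gaussIter x n = 0}

noncomputable def brjunoFinite (x : ℝ) : ℝ :=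
  ∑ k ∈ Finset.range (cfLen x), Real.log (pquot x (k + 1)) / (qden x k : ℝ)

def brjunoSuper (t : ℝ) : Set ℝ := {x | ENNReal.ofReal t < brjuno x}

def IsCompOf (A : Set ℝ) (a b : ℝ) : Prop := ∃ x ∈ A, connectedComponentIn A x = Set.Ioo a b

def diamond (κ a b : ℝ) : Set ℂ :=
  {z : ℂ | a < z.re ∧ z.re < b ∧ |z.im| ≤ κ * min (z.re - a) (b - z.re)}

noncomputable def CMset (κ M : ℝ) : Set ℂ :=
  (fun ξ : ℂ => Complex.exp (2 * Real.pi * Complex.I * ξ)) ''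
    (⋃ (a : ℝ) (b : ℝ) (_ : IsCompOf (brjunoSuper M) a b), diamond κ a b)ᶜ ∪ {0}

noncomputable def Xc (x : ℝ) : ℕ → ℝ
  | 0 => x
  | n + 1 => (gaussIter x n)⁻¹

lemma gauss_eq_fract (x : ℝ) (n : ℕ) : gaussIter x n = Int.fract (Xc x n) := by
  cases n <;> rfl

lemma pquot_eq_floor (x : ℝ) (n : ℕ) : pquot x n = ⌊Xc x n⌋ := by
  cases n <;> rfl

lemma irr_gauss {x : ℝ} (hx : Irrational x) (n : ℕ) :
    Irrational (gaussIter x n) ∧ gaussIter x n ∈ Set.Ioo (0:ℝ) 1 := by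
  induction n with
  | zero =>
    have h1 : Irrational (Int.fract x) := by
      rw [← Int.self_sub_floor]
      exact hx.sub_intCast ⌊x⌋
    exact ⟨h1, ⟨lt_of_le_of_ne (Int.fract_nonneg x) (Ne.symm h1.ne_zero),
      Int.fract_lt_one x⟩⟩
  | succ n ih =>
    obtain ⟨hirr, h0, h1⟩ := ih
    have hinv : Irrational (gaussIter x n)⁻¹ := hirr.inv
    have h1' : Irrational (Int.fract (gaussIter x n)⁻¹) := by
      rw [← Int.self_sub_floor]
      exact hinv.sub_intCast ⌊(gaussIter x n)⁻¹⌋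
    refine ⟨by simpa [gaussIter] using h1', ?_, ?_⟩
    · exact lt_of_le_of_ne (by simpa [gaussIter] using Int.fract_nonneg (gaussIter x n)⁻¹)
        (by simpa [gaussIter] using (Ne.symm h1'.ne_zero))
    · simpa [gaussIter] using Int.fract_lt_one (gaussIter x n)⁻¹

lemma Xc_irr {x : ℝ} (hx : Irrational x) (n : ℕ) : Irrational (Xc x n) := by
  cases n with
  | zero => exact hx
  | succ n => exact ((irr_gauss hx n).1).inv

lemma Xc_gt_one {x : ℝ} (hx : Irrational x) (n : ℕ) : 1 < Xc x (n + 1) := by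
  obtain ⟨_, h0, h1⟩ := irr_gauss hx n
  have : Xc x (n+1) = (gaussIter x n)⁻¹ := rfl
  rw [this]
  exact (one_lt_inv_iff₀).2 ⟨h0, h1⟩

lemma Xc_eq (x : ℝ) (n : ℕ) : Xc x n = pquot x n + gaussIter x n := by
  rw [pquot_eq_floor, gauss_eq_fract, ← Int.self_sub_floor]; ring

lemma Xc_succ_eq {x : ℝ} (hx : Irrational x) (n : ℕ) :
    Xc x n = pquot x n + (Xc x (n + 1))⁻¹ := by
  have h : Xc x (n+1) = (gaussIter x n)⁻¹ := rfl
  have hne : gaussIter x n ≠ 0 := ((irr_gauss hx n).1).ne_zero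
  rw [Xc_eq x n, h, inv_inv]

lemma pquot_pos {x : ℝ} (hx : Irrational x) {n : ℕ} (hn : 1 ≤ n) : 1 ≤ pquot x n := by
  obtain ⟨m, rfl⟩ : ∃ m, n = m + 1 := ⟨n - 1, by omega⟩
  rw [pquot_eq_floor]
  exact Int.le_floor.2 (by exact_mod_cast (Xc_gt_one hx m).le)

lemma cmp_main {x y : ℝ} (hx : Irrational x) (hy : Irrational y) :
    ∀ m : ℕ, (∀ k < m, pquot x k = pquot y k) → Xc x m < Xc y m →
      (Even m → x < y) ∧ (Odd m → y < x) := by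
  intro m
  induction m generalizing x y with
  | zero =>
    intro _ h
    exact ⟨fun _ => h, fun h' => absurd h' (by simp [Nat.odd_iff])⟩
  | succ m ih =>
    intro hag h
    have hxm : Xc x m = pquot x m + (Xc x (m + 1))⁻¹ := Xc_succ_eq hx m
    have hym : Xc y m = pquot y m + (Xc y (m + 1))⁻¹ := Xc_succ_eq hy m
    have hq : pquot x m = pquot y m := hag m (Nat.lt_succ_self m)
    have hx1 : (0:ℝ) < Xc x (m + 1) := lt_trans one_pos (Xc_gt_one hx m)
    have hinv : (Xc y (m + 1))⁻¹ < (Xc x (m + 1))⁻¹ := by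
      apply inv_strictAnti₀ hx1 h
    have hlt : Xc y m < Xc x m := by rw [hxm, hym, hq]; linarith
    have := ih hy hx (fun k hk => (hag k (Nat.lt_succ_of_lt hk)).symm) hlt
    exact ⟨fun he => this.2 (Nat.not_even_iff_odd.1 fun h' => by
        simp [Nat.even_add_one, Nat.not_even_iff_odd] at he; exact (Nat.not_even_iff_odd.2 he) h'),
      fun ho => this.1 (Nat.not_odd_iff_even.1 (Nat.odd_add_one.1 ho))⟩

lemma cmp_lt {x y : ℝ} (hx : Irrational x) (hy : Irrational y) (m : ℕ)
    (hag : ∀ k < m, pquot x k = pquot y k) (h : pquot x m < pquot y m) :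
    (Even m → x < y) ∧ (Odd m → y < x) := by
  apply cmp_main hx hy m hag
  have hxe : Xc x m = pquot x m + gaussIter x m := Xc_eq x m
  have hye : Xc y m = pquot y m + gaussIter y m := Xc_eq y m
  have h1 := (irr_gauss hx m).2
  have h2 := (irr_gauss hy m).2
  have : (pquot x m : ℝ) + 1 ≤ (pquot y m : ℝ) := by exact_mod_cast Int.add_one_le_iff.2 h
  rw [hxe, hye]
  obtain ⟨_, hb⟩ := h1
  obtain ⟨ha, _⟩ := h2
  linarith

lemma qden_pos {x : ℝ} (hx : Irrational x) : ∀ k, 1 ≤ qden x k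
  | 0 => le_refl 1
  | 1 => by rw [qden]; exact pquot_pos hx le_rfl
  | (k+2) => by
    rw [qden]
    have h1 := qden_pos hx (k+1)
    have h2 := qden_pos hx k
    have h3 := pquot_pos hx (show 1 ≤ k+2 by omega)
    nlinarith

lemma qden_congr (x y : ℝ) : ∀ k, (∀ j ≤ k, pquot x j = pquot y j) → qden x k = qden y k
  | 0, _ => rfl
  | 1, h => by rw [qden, qden, h 1 le_rfl]
  | (k+2), h => by
    rw [qden, qden, qden_congr x y (k+1) (fun j hj => h j (by omega)),
      qden_congr x y k (fun j hj => h j (by omega)), h (k+2) le_rfl]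

noncomputable def goldenR : ℝ := (1 + Real.sqrt 5) / 2

lemma golden_irr : Irrational goldenR := by
  have h5 : Irrational (Real.sqrt 5) := by
    rw [show ((5:ℝ) = ((5:ℕ):ℝ)) by norm_num, irrational_sqrt_natCast_iff]
    intro ⟨r, hr⟩
    have hr5 : r ≤ 5 := by nlinarith
    interval_cases r <;> omega
  have := ((h5.ratCast_add (q := 1)).div_ratCast (q := 2) (by norm_num))
  simpa [goldenR] using this

lemma golden_bounds : 1 < goldenR ∧ goldenR < 2 := by
  have h1 : (2:ℝ) < Real.sqrt 5 := by
    have := Real.sq_sqrt (by norm_num : (5:ℝ) ≥ 0)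
    nlinarith [Real.sqrt_nonneg 5]
  have h2 : Real.sqrt 5 < 3 := by
    have := Real.sq_sqrt (by norm_num : (5:ℝ) ≥ 0)
    nlinarith [Real.sqrt_nonneg 5]
  constructor <;> [skip; skip] <;> simp only [goldenR] <;> linarith

lemma golden_inv : (goldenR - 1)⁻¹ = goldenR := by
  have h : (goldenR - 1) * goldenR = 1 := by
    have := Real.sq_sqrt (by norm_num : (5:ℝ) ≥ 0)
    simp only [goldenR]
    nlinarith
  exact inv_eq_of_mul_eq_one_right h

lemma golden_floor : ⌊goldenR⌋ = 1 := by
  have hb := golden_bounds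
  rw [Int.floor_eq_iff]
  constructor <;> push_cast <;> linarith [hb.1, hb.2]

lemma golden_fract : Int.fract goldenR = goldenR - 1 := by
  rw [← Int.self_sub_floor, golden_floor]; norm_num

/-- Construct an irrational whose first `M+1` partial quotients are prescribed and
whose remaining quotients are all 1. -/
lemma exists_cf (M : ℕ) (a : ℕ → ℤ) (ha : ∀ j, 1 ≤ j → j ≤ M → 1 ≤ a j) :
    ∃ y : ℝ, Irrational y ∧ (∀ j ≤ M, pquot y j = a j) ∧ (∀ j, M < j → pquot y j = 1) := by
  set s : ℕ → ℝ := fun i => Nat.rec goldenR (fun i si => (a (M - i) : ℝ) + si⁻¹) i with hs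
  have hs0 : s 0 = goldenR := rfl
  have hsS : ∀ i, s (i + 1) = (a (M - i) : ℝ) + (s i)⁻¹ := fun i => rfl
  have hkey : ∀ i, Irrational (s i) ∧ (i ≤ M → 1 < s i) := by
    intro i
    induction i with
    | zero => exact ⟨golden_irr, fun _ => golden_bounds.1⟩
    | succ i ih =>
      have hirr : Irrational (s (i+1)) := by
        rw [hsS]; exact (ih.1.inv).intCast_add _
      refine ⟨hirr, fun hi => ?_⟩
      have h1 : 1 ≤ a (M - i) := ha _ (by omega) (by omega)
      have h2 : 1 < s i := ih.2 (by omega)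
      have h3 : 0 < (s i)⁻¹ := inv_pos.2 (by linarith)
      rw [hsS]
      have : (1:ℝ) ≤ (a (M - i) : ℝ) := by exact_mod_cast h1
      linarith
  set y : ℝ := s (M + 1) with hy
  have hyirr : Irrational y := (hkey (M+1)).1
  -- main claim: Xc y j = s (M + 1 - j) for j ≤ M + 1
  have hXc : ∀ j ≤ M + 1, Xc y j = s (M + 1 - j) := by
    intro j hj
    induction j with
    | zero => rfl
    | succ j ih =>
      have hj' : j ≤ M := by omega
      have hprev : Xc y j = s (M + 1 - j) := ih (by omega)
      have hrw : M + 1 - j = (M - j) + 1 := by omega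
      have hMj : M - j ≤ M := by omega
      have hgt : 1 < s (M - j) := (hkey (M - j)).2 hMj
      have hinv01 : (s (M - j))⁻¹ ∈ Set.Ioo (0:ℝ) 1 := by
        constructor
        · exact inv_pos.2 (by linarith)
        · exact inv_lt_one_of_one_lt₀ hgt
      have hfr : Int.fract (Xc y j) = (s (M - j))⁻¹ := by
        rw [hprev, hrw, hsS]
        have hMjj : M - (M - j) = j := by omega
        rw [Int.fract_intCast_add, Int.fract_eq_self.2 ⟨hinv01.1.le, hinv01.2⟩]
      have : Xc y (j+1) = (gaussIter y j)⁻¹ := rfl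
      rw [this, gauss_eq_fract, hfr, inv_inv]
      congr 1
      omega
  have hfloor : ∀ j ≤ M, pquot y j = a j := by
    intro j hj
    rw [pquot_eq_floor, hXc j (by omega)]
    have hrw : M + 1 - j = (M - j) + 1 := by omega
    rw [hrw, hsS]
    have hMjj : M - (M - j) = j := by omega
    rw [hMjj]
    have hgt : 1 < s (M - j) := (hkey (M - j)).2 (by omega)
    have h0 : (0:ℝ) ≤ (s (M - j))⁻¹ := (inv_pos.2 (by linarith)).le
    have h1 : (s (M - j))⁻¹ < 1 := inv_lt_one_of_one_lt₀ hgt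
    rw [Int.floor_intCast_add, Int.floor_eq_zero_iff.2 ⟨h0, h1⟩, add_zero]
  -- tail
  have htail : ∀ i, Xc y (M + 1 + i) = goldenR := by
    intro i
    induction i with
    | zero => simpa [hs0] using hXc (M+1) le_rfl
    | succ i ih =>
      have : Xc y (M + 1 + i + 1) = (gaussIter y (M + 1 + i))⁻¹ := rfl
      rw [show M + 1 + (i+1) = M + 1 + i + 1 by ring, this, gauss_eq_fract, ih,
        golden_fract, golden_inv]
  refine ⟨y, hyirr, hfloor, fun j hj => ?_⟩
  obtain ⟨i, rfl⟩ : ∃ i, j = M + 1 + i := ⟨j - (M+1), by omega⟩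
  rw [pquot_eq_floor, htail i, golden_floor]

lemma key {ξ : ℝ} (hξ : Irrational ξ) (T : ℝ≥0∞) (hB : brjuno ξ ≤ T)
    (M : ℕ) (hM : 1 ≤ M) (hA : 2 ≤ pquot ξ M) :
    ∃ y : ℝ, Irrational y ∧ brjuno y ≤ T ∧
      (∀ j < M, pquot y j = pquot ξ j) ∧ pquot y M = pquot ξ M - 1 := by
  set a : ℕ → ℤ := fun j => if j = M then pquot ξ M - 1 else pquot ξ j with ha
  obtain ⟨y, hyirr, hyle, hygt⟩ := exists_cf M a (by
    intro j hj1 hjM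
    by_cases h : j = M
    · simp [ha, h]; omega
    · simpa [ha, h] using pquot_pos hξ hj1)
  have hylt : ∀ j < M, pquot y j = pquot ξ j := by
    intro j hj
    rw [hyle j hj.le]
    simp [ha, Nat.ne_of_lt hj]
  have hyM : pquot y M = pquot ξ M - 1 := by
    rw [hyle M le_rfl]; simp [ha]
  refine ⟨y, hyirr, ?_, hylt, hyM⟩
  have hqden : ∀ k < M, qden y k = qden ξ k := by
    intro k hk
    exact qden_congr y ξ k (fun j hj => hylt j (by omega))
  have hterm : ∀ k < M, brjunoTerm y k ≤ brjunoTerm ξ k := by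
    intro k hk
    rw [brjunoTerm, brjunoTerm, hqden k hk]
    have hqpos : (0:ℝ) < (qden ξ k : ℝ) := by
      exact_mod_cast lt_of_lt_of_le zero_lt_one (qden_pos hξ k)
    rw [div_le_div_iff_of_pos_right hqpos]
    by_cases h : k + 1 = M
    · have h1 : pquot y (k+1) = pquot ξ M - 1 := by rw [h, hyM]
      rw [h1, h]
      apply Real.log_le_log
      · exact_mod_cast (by omega : (0:ℤ) < pquot ξ M - 1)
      · exact_mod_cast (by omega : pquot ξ M - 1 ≤ pquot ξ M)
    · rw [hylt (k+1) (by omega)]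
  calc brjuno y = ∑ k ∈ Finset.range M, ENNReal.ofReal (brjunoTerm y k) := by
        rw [brjuno, if_pos hyirr]
        apply tsum_eq_sum
        intro k hk
        have hk' : M < k + 1 := by
          rw [Finset.mem_range] at hk; omega
        rw [brjunoTerm, hygt (k+1) hk']
        simp
    _ ≤ ∑ k ∈ Finset.range M, ENNReal.ofReal (brjunoTerm ξ k) := by
        apply Finset.sum_le_sum
        intro k hk
        exact ENNReal.ofReal_le_ofReal (hterm k (Finset.mem_range.1 hk))
    _ ≤ ∑' k, ENNReal.ofReal (brjunoTerm ξ k) := ENNReal.sum_le_tsum _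
    _ = brjuno ξ := by rw [brjuno, if_pos hξ]
    _ ≤ T := hB

lemma endpoints {t : ℝ} {ξm ξp : ℝ}
    (hcomp : ∃ x ∈ brjunoSuper t,
      connectedComponentIn (brjunoSuper t) x = Set.Ioo ξm ξp) :
    ξm < ξp ∧ Irrational ξm ∧ Irrational ξp ∧
      brjuno ξm ≤ ENNReal.ofReal t ∧ brjuno ξp ≤ ENNReal.ofReal t ∧
      ∀ y ∈ Set.Ioo ξm ξp, ENNReal.ofReal t < brjuno y := by
  obtain ⟨x, hxA, hcc⟩ := hcomp
  have hmem : x ∈ Set.Ioo ξm ξp := hcc ▸ mem_connectedComponentIn hxA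
  have hsub : Set.Ioo ξm ξp ⊆ brjunoSuper t := hcc ▸ connectedComponentIn_subset _ _
  have hlt : ξm < ξp := lt_trans hmem.1 hmem.2
  have hpnot : ξp ∉ brjunoSuper t := by
    intro hp
    have hIoc : Set.Ioc ξm ξp ⊆ brjunoSuper t := by
      intro z hz
      rcases eq_or_lt_of_le hz.2 with h | h
      · rwa [h]
      · exact hsub ⟨hz.1, h⟩
    have := (isPreconnected_Ioc).subset_connectedComponentIn
      (Set.mem_Ioc.2 ⟨hmem.1, hmem.2.le⟩) hIoc
    rw [hcc] at this
    exact lt_irrefl ξp (this (Set.mem_Ioc.2 ⟨hlt, le_rfl⟩)).2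
  have hmnot : ξm ∉ brjunoSuper t := by
    intro hp
    have hIco : Set.Ico ξm ξp ⊆ brjunoSuper t := by
      intro z hz
      rcases eq_or_lt_of_le hz.1 with h | h
      · rwa [← h]
      · exact hsub ⟨h, hz.2⟩
    have := (isPreconnected_Ico).subset_connectedComponentIn
      (Set.mem_Ico.2 ⟨hmem.1.le, hmem.2⟩) hIco
    rw [hcc] at this
    exact lt_irrefl ξm (this (Set.mem_Ico.2 ⟨le_rfl, hlt⟩)).1
  have hirr : ∀ z : ℝ, z ∉ brjunoSuper t → Irrational z ∧ brjuno z ≤ ENNReal.ofReal t := by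
    intro z hz
    have hle : brjuno z ≤ ENNReal.ofReal t := not_lt.1 hz
    have hzirr : Irrational z := by
      by_contra h
      rw [brjuno, if_neg h] at hle
      exact absurd (le_antisymm le_top hle) (by simp [ENNReal.ofReal_lt_top.ne])
    exact ⟨hzirr, hle⟩
  obtain ⟨hmi, hmb⟩ := hirr ξm hmnot
  obtain ⟨hpi, hpb⟩ := hirr ξp hpnot
  exact ⟨hlt, hmi, hpi, hmb, hpb, fun y hy => hsub hy⟩

/-- structure of the continued fraction expansions of the endpoints of a
connected component of `A_t` containing no integer, after the first index `N` where
they differ. -/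
theorem statement6 (t : ℝ) (ht : 0 ≤ t) (ξm ξp : ℝ)
    (hcomp : ∃ x ∈ brjunoSuper t,
      connectedComponentIn (brjunoSuper t) x = Set.Ioo ξm ξp)
    (hnoint : ∀ n : ℤ, (n : ℝ) ∉ Set.Ioo ξm ξp)
    (N : ℕ) (hN : 1 ≤ N)
    (hagree : ∀ k < N, pquot ξm k = pquot ξp k)
    (hdiff : pquot ξm N ≠ pquot ξp N) :
    (Even N →
      2 ≤ pquot ξp N ∧ pquot ξm N = pquot ξp N - 1 ∧
      (∀ k : ℕ, 1 ≤ k → pquot ξp (N + 2 * k) = 1) ∧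
      (∀ k : ℕ, pquot ξm (N + 2 * k + 1) = 1)) ∧
    (Odd N →
      2 ≤ pquot ξm N ∧ pquot ξp N = pquot ξm N - 1 ∧
      (∀ k : ℕ, 1 ≤ k → pquot ξm (N + 2 * k) = 1) ∧
      (∀ k : ℕ, pquot ξp (N + 2 * k + 1) = 1)) := by
  obtain ⟨hlt, hmi, hpi, hmb, hpb, hint⟩ := endpoints hcomp
  constructor
  · -- Even case
    intro he
    -- pquot ξm N < pquot ξp N
    have hmlt : pquot ξm N < pquot ξp N := by
      rcases lt_trichotomy (pquot ξm N) (pquot ξp N) with h | h | h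
      · exact h
      · exact absurd h hdiff
      · have := (cmp_lt hpi hmi N (fun k hk => (hagree k hk).symm) h).1 he
        exact absurd hlt (not_lt.2 this.le)
    have h1m : 1 ≤ pquot ξm N := pquot_pos hmi hN
    refine ⟨by omega, ?_, ?_, ?_⟩
    · -- a_N⁻ = a_N⁺ - 1
      by_contra h
      have h2 : pquot ξm N ≤ pquot ξp N - 2 := by omega
      obtain ⟨y, hyi, hyb, hyag, hyM⟩ := key hpi _ hpb N hN (by omega)
      have hy1 : ξm < y := by
        refine (cmp_lt hmi hyi N (fun k hk => (hagree k hk).trans (hyag k hk).symm) ?_).1 he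
        omega
      have hy2 : y < ξp := by
        refine (cmp_lt hyi hpi N hyag ?_).1 he
        omega
      exact absurd (hint y ⟨hy1, hy2⟩) (not_lt.2 hyb)
    · -- tail of ξp at even indices
      intro k hk
      by_contra h
      have h2 : 2 ≤ pquot ξp (N + 2 * k) := by
        have := pquot_pos hpi (show 1 ≤ N + 2 * k by omega)
        omega
      obtain ⟨y, hyi, hyb, hyag, hyM⟩ := key hpi _ hpb (N + 2 * k) (by omega) h2
      have hy2 : y < ξp := by
        refine (cmp_lt hyi hpi (N + 2 * k) hyag ?_).1 (he.add (even_two_mul k)) ; omega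
      have hy1 : ξm < y := by
        refine (cmp_lt hmi hyi N
          (fun j hj => (hagree j hj).trans (hyag j (by omega)).symm) ?_).1 he
        rw [hyag N (by omega)]
        exact hmlt
      exact absurd (hint y ⟨hy1, hy2⟩) (not_lt.2 hyb)
    · -- tail of ξm at odd indices
      intro k
      by_contra h
      have h2 : 2 ≤ pquot ξm (N + 2 * k + 1) := by
        have := pquot_pos hmi (show 1 ≤ N + 2 * k + 1 by omega)
        omega
      obtain ⟨y, hyi, hyb, hyag, hyM⟩ := key hmi _ hmb (N + 2 * k + 1) (by omega) h2
      have hodd : Odd (N + 2 * k + 1) := (he.add (even_two_mul k)).add_one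
      have hy1 : ξm < y := by
        refine (cmp_lt hyi hmi (N + 2 * k + 1) hyag ?_).2 hodd ; omega
      have hy2 : y < ξp := by
        refine (cmp_lt hyi hpi N
          (fun j hj => (hyag j (by omega)).trans (hagree j hj)) ?_).1 he
        rw [hyag N (by omega)]
        exact hmlt
      exact absurd (hint y ⟨hy1, hy2⟩) (not_lt.2 hyb)
  · -- Odd case
    intro ho
    have hplt : pquot ξp N < pquot ξm N := by
      rcases lt_trichotomy (pquot ξp N) (pquot ξm N) with h | h | h
      · exact h
      · exact absurd h.symm hdiff
      · have := (cmp_lt hmi hpi N hagree h).2 ho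
        exact absurd hlt (not_lt.2 this.le)
    have h1p : 1 ≤ pquot ξp N := pquot_pos hpi hN
    refine ⟨by omega, ?_, ?_, ?_⟩
    · by_contra h
      have h2 : pquot ξp N ≤ pquot ξm N - 2 := by omega
      obtain ⟨y, hyi, hyb, hyag, hyM⟩ := key hmi _ hmb N hN (by omega)
      have hy2 : y < ξp := by
        refine (cmp_lt hpi hyi N
          (fun k hk => (hagree k hk).symm.trans (hyag k hk).symm) ?_).2 ho
        omega
      have hy1 : ξm < y := by
        refine (cmp_lt hyi hmi N hyag ?_).2 ho
        omega
      exact absurd (hint y ⟨hy1, hy2⟩) (not_lt.2 hyb)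
    · intro k hk
      by_contra h
      have h2 : 2 ≤ pquot ξm (N + 2 * k) := by
        have := pquot_pos hmi (show 1 ≤ N + 2 * k by omega)
        omega
      obtain ⟨y, hyi, hyb, hyag, hyM⟩ := key hmi _ hmb (N + 2 * k) (by omega) h2
      have hy1 : ξm < y := by
        refine (cmp_lt hyi hmi (N + 2 * k) hyag ?_).2 (ho.add_even (even_two_mul k)) ; omega
      have hy2 : y < ξp := by
        refine (cmp_lt hpi hyi N
          (fun j hj => (hagree j hj).symm.trans (hyag j (by omega)).symm) ?_).2 ho
        rw [hyag N (by omega)]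
        exact hplt
      exact absurd (hint y ⟨hy1, hy2⟩) (not_lt.2 hyb)
    · intro k
      by_contra h
      have h2 : 2 ≤ pquot ξp (N + 2 * k + 1) := by
        have := pquot_pos hpi (show 1 ≤ N + 2 * k + 1 by omega)
        omega
      obtain ⟨y, hyi, hyb, hyag, hyM⟩ := key hpi _ hpb (N + 2 * k + 1) (by omega) h2
      have heven : Even (N + 2 * k + 1) := (ho.add_even (even_two_mul k)).add_one
      have hy2 : y < ξp := by
        refine (cmp_lt hyi hpi (N + 2 * k + 1) hyag ?_).1 heven ; omega
      have hy1 : ξm < y := by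
        refine (cmp_lt hyi hmi N
          (fun j hj => (hyag j (by omega)).trans (hagree j hj).symm) ?_).2 ho
        rw [hyag N (by omega)]
        exact hplt
      exact absurd (hint y ⟨hy1, hy2⟩) (not_lt.2 hyb)
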